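/- Let M be a bounded open subset of ℝ², h > 0, and Ω = M × (−h, 0) ⊂ ℝ³. Let ψ : ℝ³ → ℝ be continuously differentiable. Then ∫_Ω ψ(x,y,z)⁶ dx dy dz ≤ 2h·∫_M ψ(x,y,0)⁶ dx dy + 9h²·∫_Ω ψ(x,y,z)⁴ (∂_z ψ(x,y,z))² dx dy dz. -/

import Mathlib

open MeasureTheory Set

private lemma cs_general {μ : Measure ℝ} (hμ : μ Set.univ ≠ ⊤) {g : ℝ → ℝ}
    (hg : Integrable g μ) (hg2 : Integrable (fun x => g x ^ 2) μ) :
    (∫ x, g x ∂μ) ^ 2 ≤ (μ Set.univ).toReal * ∫ x, g x ^ 2 ∂μ := by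
  set I := ∫ x, g x ∂μ with hI
  set J := ∫ x, g x ^ 2 ∂μ with hJdef
  set m := (μ Set.univ).toReal with hm
  have hJ0 : 0 ≤ J := integral_nonneg fun x => sq_nonneg _
  have hm0 : 0 ≤ m := ENNReal.toReal_nonneg
  haveI : IsFiniteMeasure μ := ⟨lt_top_iff_ne_top.2 hμ⟩
  have key : ∀ t : ℝ, 0 ≤ t ^ 2 * J - 2 * t * I + m := by
    intro t
    have h1 : (∫ x, (t * g x - 1) ^ 2 ∂μ) = t ^ 2 * J - 2 * t * I + m := by
      have he : ∀ x, (t * g x - 1) ^ 2 = t ^ 2 * g x ^ 2 - 2 * t * g x + 1 := fun x => by ring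
      simp_rw [he]
      have hi1 : Integrable (fun x => t ^ 2 * g x ^ 2) μ := hg2.const_mul _
      have hi2 : Integrable (fun x => 2 * t * g x) μ := hg.const_mul _
      have hi3 : Integrable (fun x => t ^ 2 * g x ^ 2 - 2 * t * g x) μ := hi1.sub hi2
      rw [integral_add hi3 (integrable_const 1), integral_sub hi1 hi2, integral_const_mul,
        integral_const_mul, integral_const]
      simp [hm, hI, hJdef, smul_eq_mul, Measure.real]
    rw [← h1]
    exact integral_nonneg fun x => sq_nonneg _
  rcases eq_or_lt_of_le hJ0 with hJ | hJ
  · have hIzero : I = 0 := by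
      by_contra hI0
      have hk := key ((m + I ^ 2) / (2 * I))
      rw [← hJ] at hk
      have h2I : (2 : ℝ) * I ≠ 0 := by simpa using hI0
      have hc : 2 * ((m + I ^ 2) / (2 * I)) * I = m + I ^ 2 := by
        field_simp
      have hIsq : I ^ 2 = 0 := le_antisymm (by nlinarith) (sq_nonneg I)
      exact hI0 (sq_eq_zero_iff.1 hIsq)
    rw [hIzero, ← hJ]; simp
  · have hk := key (I / J)
    have hc : (I / J) ^ 2 * J - 2 * (I / J) * I + m = m - I ^ 2 / J := by
      field_simp; ring
    rw [hc] at hk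
    have := (div_le_iff₀ hJ).1 (by linarith : I ^ 2 / J ≤ m)
    linarith [this]

private lemma column {f : ℝ → ℝ} (hf : ContDiff ℝ 1 f) {h : ℝ} (hh : 0 < h) :
    ∫ z in Ioc (-h) 0, f z ^ 6 ≤
      2 * h * f 0 ^ 6 + 9 * h ^ 2 * ∫ z in Ioc (-h) 0, f z ^ 4 * deriv f z ^ 2 := by
  have hfd : Differentiable ℝ f := hf.differentiable one_ne_zero
  have hfc : Continuous f := hf.continuous
  have hgc : Continuous (deriv f) := hf.continuous_deriv le_rfl
  have hcont3 : Continuous fun s => 3 * f s ^ 2 * deriv f s :=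
    (continuous_const.mul (hfc.pow 2)).mul hgc
  have hcont36 : Continuous fun s => (3 * f s ^ 2 * deriv f s) ^ 2 := hcont3.pow 2
  have hcont4 : Continuous fun s => f s ^ 4 * deriv f s ^ 2 := (hfc.pow 4).mul (hgc.pow 2)
  set B := ∫ z in Ioc (-h) 0, f z ^ 4 * deriv f z ^ 2 with hB
  have hintB : IntegrableOn (fun z => f z ^ 4 * deriv f z ^ 2) (Ioc (-h) 0) :=
    hcont4.integrableOn_Ioc
  have hB0 : 0 ≤ B := setIntegral_nonneg measurableSet_Ioc fun x _ => by positivity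
  -- pointwise bound
  have key : ∀ z ∈ Ioc (-h) 0, f z ^ 6 ≤ 2 * (f 0 ^ 3) ^ 2 + 18 * B * (-z) := by
    intro z hz
    have hz0 : z ≤ 0 := hz.2
    have hzh : -h ≤ z := hz.1.le
    set J := ∫ s in z..0, 3 * f s ^ 2 * deriv f s with hJ
    have hftc : f 0 ^ 3 - f z ^ 3 = J := by
      rw [hJ, intervalIntegral.integral_eq_sub_of_hasDerivAt
        (f := fun u => f u ^ 3) (fun s _ => by simpa [Pi.pow_def] using ((hfd s).hasDerivAt).pow 3)
        (hcont3.intervalIntegrable _ _)]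
    have hJineq : J ^ 2 ≤ 9 * B * (-z) := by
      have hJset : J = ∫ s in Ioc z 0, 3 * f s ^ 2 * deriv f s :=
        intervalIntegral.integral_of_le hz0
      have hvolne : (volume.restrict (Ioc z 0)) Set.univ ≠ ⊤ := by
        rw [Measure.restrict_apply_univ, Real.volume_Ioc]
        exact ENNReal.ofReal_ne_top
      have hvol : ((volume.restrict (Ioc z 0)) Set.univ).toReal = -z := by
        rw [Measure.restrict_apply_univ, Real.volume_Ioc,
          ENNReal.toReal_ofReal (by linarith)]
        ring
      have hcs := cs_general hvolne (hcont3.integrableOn_Ioc) (hcont36.integrableOn_Ioc)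
      rw [hvol] at hcs
      have hmono : ∫ s in Ioc z 0, (3 * f s ^ 2 * deriv f s) ^ 2 ≤ 9 * B := by
        have he : ∀ s, (3 * f s ^ 2 * deriv f s) ^ 2 = 9 * (f s ^ 4 * deriv f s ^ 2) :=
          fun s => by ring
        simp_rw [he]
        rw [integral_const_mul, hB]
        have hsub : ∫ s in Ioc z 0, f s ^ 4 * deriv f s ^ 2 ≤
            ∫ s in Ioc (-h) 0, f s ^ 4 * deriv f s ^ 2 :=
          setIntegral_mono_set hintB
            (Filter.Eventually.of_forall fun s => by positivity)
            (HasSubset.Subset.eventuallyLE (Ioc_subset_Ioc_left hzh))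
        nlinarith [hsub]
      calc J ^ 2 ≤ (-z) * ∫ s in Ioc z 0, (3 * f s ^ 2 * deriv f s) ^ 2 := by
            rw [hJset]; exact hcs
        _ ≤ 9 * B * (-z) := by nlinarith [hmono]
    have h6 : f z ^ 6 = (f 0 ^ 3 - J) ^ 2 := by
      have : f z ^ 3 = f 0 ^ 3 - J := by linarith [hftc]
      rw [show f z ^ 6 = (f z ^ 3) ^ 2 by ring, this]
    nlinarith [sq_nonneg (f 0 ^ 3 + J), hJineq, h6]
  -- integrate the bound
  have hbound : ∫ z in Ioc (-h) 0, f z ^ 6 ≤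
      ∫ z in Ioc (-h) 0, (2 * (f 0 ^ 3) ^ 2 + 18 * B * (-z)) := by
    refine setIntegral_mono_on ((hfc.pow 6).integrableOn_Ioc)
      ((continuous_const.add ((continuous_const.mul continuous_neg))).integrableOn_Ioc)
      measurableSet_Ioc key
  have hcomp : ∫ z in Ioc (-h) 0, (2 * (f 0 ^ 3) ^ 2 + 18 * B * (-z)) =
      2 * h * (f 0 ^ 3) ^ 2 + 9 * B * h ^ 2 := by
    rw [← intervalIntegral.integral_of_le (by linarith : -h ≤ (0:ℝ))]
    have hder : ∀ z ∈ uIcc (-h) (0:ℝ), HasDerivAt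
        (fun z => 2 * (f 0 ^ 3) ^ 2 * z - 9 * B * z ^ 2)
        (2 * (f 0 ^ 3) ^ 2 + 18 * B * (-z)) z := by
      intro z _
      have h1 : HasDerivAt (fun z : ℝ => 2 * (f 0 ^ 3) ^ 2 * z) (2 * (f 0 ^ 3) ^ 2) z := by
        simpa using (hasDerivAt_id z).const_mul (2 * (f 0 ^ 3) ^ 2)
      have h2 : HasDerivAt (fun z : ℝ => 9 * B * z ^ 2) (9 * B * (2 * z)) z := by
        simpa using (hasDerivAt_pow 2 z).const_mul (9 * B)
      exact (h1.sub h2).congr_deriv (by ring)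
    rw [intervalIntegral.integral_eq_sub_of_hasDerivAt hder
      ((continuous_const.add (continuous_const.mul continuous_neg)).intervalIntegrable _ _)]
    ring
  have : 2 * h * (f 0 ^ 3) ^ 2 = 2 * h * f 0 ^ 6 := by ring
  linarith [hbound, hcomp.le, hcomp.ge]

private lemma deriv_slice {ψ : ℝ × ℝ × ℝ → ℝ} (hψ : ContDiff ℝ 1 ψ) (x y z : ℝ) :
    deriv (fun t => ψ (x, y, t)) z = fderiv ℝ ψ (x, y, z) (0, 0, 1) := by
  have h1 : HasDerivAt (fun t : ℝ => ((x, y, t) : ℝ × ℝ × ℝ)) ((0 : ℝ), (0 : ℝ), (1 : ℝ)) z :=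
    (hasDerivAt_const z x).prodMk ((hasDerivAt_const z y).prodMk (hasDerivAt_id z))
  exact ((hψ.differentiable one_ne_zero (x, y, z)).hasFDerivAt.comp_hasDerivAt z h1).deriv

set_option maxHeartbeats 1000000 in
theorem stmt_3 (M : Set (ℝ × ℝ)) (hM : IsOpen M) (hMb : Bornology.IsBounded M)
    (h : ℝ) (hh : 0 < h) (ψ : ℝ × ℝ × ℝ → ℝ) (hψ : ContDiff ℝ 1 ψ)
    (Ω : Set (ℝ × ℝ × ℝ))
    (hΩ : Ω = {q : ℝ × ℝ × ℝ | (q.1, q.2.1) ∈ M ∧ q.2.2 ∈ Set.Ioo (-h) 0}) :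
    (∫ q in Ω, (ψ q) ^ 6) ≤
      2 * h * (∫ q in M, (ψ (q.1, q.2, 0)) ^ 6)
        + 9 * h ^ 2 *
          ∫ q in Ω, (ψ q) ^ 4 * (deriv (fun z => ψ (q.1, q.2.1, z)) q.2.2) ^ 2 := by
  have hψc : Continuous ψ := hψ.continuous
  set v : ℝ × ℝ × ℝ := ((0 : ℝ), (0 : ℝ), (1 : ℝ)) with hv
  set g : ℝ × ℝ × ℝ → ℝ := fun q => ψ q ^ 4 * (fderiv ℝ ψ q v) ^ 2 with hgdef
  have hgc : Continuous g := by
    apply (hψc.pow 4).mul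
    have : Continuous fun q : ℝ × ℝ × ℝ => (fderiv ℝ ψ q) v := by
      have hc := hψ.continuous_fderiv_apply one_ne_zero
      exact hc.comp (continuous_id.prodMk continuous_const)
    exact this.pow 2
  have hrw : ∀ q : ℝ × ℝ × ℝ,
      ψ q ^ 4 * (deriv (fun z => ψ (q.1, q.2.1, z)) q.2.2) ^ 2 = g q := by
    intro q
    rw [deriv_slice hψ]
  simp_rw [hrw]
  -- transfer to the product set
  set S : Set ((ℝ × ℝ) × ℝ) := M ×ˢ Set.Ioo (-h) 0 with hS
  have mp : MeasurePreserving (MeasurableEquiv.prodAssoc : (ℝ × ℝ) × ℝ ≃ᵐ ℝ × ℝ × ℝ)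
      volume volume := by
    exact measurePreserving_prodAssoc (volume : Measure ℝ) volume volume
  have hΩim : Ω = MeasurableEquiv.prodAssoc '' S := by
    rw [hΩ]
    ext q
    constructor
    · rintro ⟨hq1, hq2⟩
      exact ⟨((q.1, q.2.1), q.2.2), ⟨hq1, hq2⟩, rfl⟩
    · rintro ⟨⟨⟨x, y⟩, z⟩, ⟨hxy, hz⟩, rfl⟩
      exact ⟨hxy, hz⟩
  rw [hΩim, mp.setIntegral_image_emb (MeasurableEquiv.measurableEmbedding _),
    mp.setIntegral_image_emb (MeasurableEquiv.measurableEmbedding _)]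
  -- continuity of the transported integrands
  have hpa : Continuous (⇑(MeasurableEquiv.prodAssoc : (ℝ × ℝ) × ℝ ≃ᵐ ℝ × ℝ × ℝ)) := by
    exact (continuous_fst.comp continuous_fst).prodMk
      ((continuous_snd.comp continuous_fst).prodMk continuous_snd)
  have hcont6 : Continuous fun p : (ℝ × ℝ) × ℝ =>
      ψ (MeasurableEquiv.prodAssoc p) ^ 6 := ((hψc.comp hpa).pow 6)
  have hcontg : Continuous fun p : (ℝ × ℝ) × ℝ =>
      g (MeasurableEquiv.prodAssoc p) := hgc.comp hpa
  have hSb : Bornology.IsBounded S := hMb.prod (Metric.isBounded_Ioo _ _)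
  have hIntS : ∀ {F : (ℝ × ℝ) × ℝ → ℝ}, Continuous F → IntegrableOn F S volume :=
    fun hF => (hF.continuousOn.integrableOn_compact hSb.isCompact_closure).mono_set subset_closure
  have hi6 : IntegrableOn (fun p : (ℝ × ℝ) × ℝ => ψ (MeasurableEquiv.prodAssoc p) ^ 6) S
      ((volume : Measure (ℝ × ℝ)).prod (volume : Measure ℝ)) := by
    rw [← Measure.volume_eq_prod]; exact hIntS hcont6
  have hig : IntegrableOn (fun p : (ℝ × ℝ) × ℝ => g (MeasurableEquiv.prodAssoc p)) S
      ((volume : Measure (ℝ × ℝ)).prod (volume : Measure ℝ)) := by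
    rw [← Measure.volume_eq_prod]; exact hIntS hcontg
  have fub1 : (∫ p in S, ψ (MeasurableEquiv.prodAssoc p) ^ 6) =
      ∫ x in M, ∫ z in Set.Ioo (-h) 0, ψ (x.1, x.2, z) ^ 6 := by
    rw [Measure.volume_eq_prod, setIntegral_prod _ hi6]
    rfl
  have fub2 : (∫ p in S, g (MeasurableEquiv.prodAssoc p)) =
      ∫ x in M, ∫ z in Set.Ioo (-h) 0, g (x.1, x.2, z) := by
    rw [Measure.volume_eq_prod, setIntegral_prod _ hig]
    rfl
  rw [fub1, fub2]
  -- column estimate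
  have colapp : ∀ x : ℝ × ℝ,
      (∫ z in Set.Ioo (-h) 0, ψ (x.1, x.2, z) ^ 6) ≤
        2 * h * ψ (x.1, x.2, 0) ^ 6
          + 9 * h ^ 2 * ∫ z in Set.Ioo (-h) 0, g (x.1, x.2, z) := by
    intro x
    have hfC : ContDiff ℝ 1 (fun z : ℝ => ψ (x.1, x.2, z)) :=
      hψ.comp (contDiff_const.prodMk (contDiff_const.prodMk contDiff_id))
    have hcol := column hfC hh
    rw [integral_Ioc_eq_integral_Ioo, integral_Ioc_eq_integral_Ioo] at hcol
    have : ∀ z : ℝ, ψ (x.1, x.2, z) ^ 4 * deriv (fun z : ℝ => ψ (x.1, x.2, z)) z ^ 2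
        = g (x.1, x.2, z) := by
      intro z
      rw [deriv_slice hψ]
    simp_rw [this] at hcol
    exact hcol
  -- integrability over M
  have hprodrw6 : Integrable (fun p : (ℝ × ℝ) × ℝ => ψ (MeasurableEquiv.prodAssoc p) ^ 6)
      (((volume : Measure (ℝ × ℝ)).restrict M).prod ((volume : Measure ℝ).restrict (Set.Ioo (-h) 0))) := by
    rw [Measure.prod_restrict]; exact hi6
  have hprodrwg : Integrable (fun p : (ℝ × ℝ) × ℝ => g (MeasurableEquiv.prodAssoc p))
      (((volume : Measure (ℝ × ℝ)).restrict M).prod ((volume : Measure ℝ).restrict (Set.Ioo (-h) 0))) := by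
    rw [Measure.prod_restrict]; exact hig
  have hMint1 : IntegrableOn (fun x : ℝ × ℝ => ∫ z in Set.Ioo (-h) 0, ψ (x.1, x.2, z) ^ 6)
      M volume := hprodrw6.integral_prod_left
  have hMint2 : IntegrableOn (fun x : ℝ × ℝ => ∫ z in Set.Ioo (-h) 0, g (x.1, x.2, z))
      M volume := hprodrwg.integral_prod_left
  have htop : IntegrableOn (fun x : ℝ × ℝ => ψ (x.1, x.2, 0) ^ 6) M volume := by
    have hc : Continuous fun x : ℝ × ℝ => ψ (x.1, x.2, 0) ^ 6 :=
      (hψc.comp (continuous_fst.prodMk (continuous_snd.prodMk continuous_const))).pow 6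
    exact (hc.continuousOn.integrableOn_compact hMb.isCompact_closure).mono_set subset_closure
  have step1 := setIntegral_mono_on hMint1
    ((htop.const_mul (2 * h)).add (hMint2.const_mul (9 * h ^ 2)))
    hM.measurableSet (fun x _ => colapp x)
  have step2 : (∫ x in M, (2 * h * ψ (x.1, x.2, 0) ^ 6
        + 9 * h ^ 2 * ∫ z in Set.Ioo (-h) 0, g (x.1, x.2, z))) =
      2 * h * (∫ q in M, ψ (q.1, q.2, 0) ^ 6)
        + 9 * h ^ 2 * ∫ x in M, ∫ z in Set.Ioo (-h) 0, g (x.1, x.2, z) := by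
    rw [integral_add (htop.const_mul _) (hMint2.const_mul _), integral_const_mul,
      integral_const_mul]
  exact step1.trans step2.le
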